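/- The usual derivative ∂ does not belong to the k-subalgebra of End_k(R) generated by λ_x, ∂^β, and { σ_a : a ∈ ℤ } (this subalgebra is D_β·σ(Γ), where D_β is the k-subalgebra generated by λ_x and ∂^β). In particular, D_q ≠ D_β·σ(Γ). -/

import Mathlib

open Polynomial

noncomputable section

namespace QDiff1

variable (k : Type*) [Field k]

/-- Left multiplication operator `λ_r`. -/
def lmul (r : k[X]) : Module.End k k[X] := LinearMap.mulLeft k r

variable {k}

/-- The automorphism `σ_a`, acting on `x^b` by `q^(a*b)`. -/
def sigma (q : k) (a : ℤ) : Module.End k k[X] :=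
  (aeval (C (q ^ a) * X) : k[X] →ₐ[k] k[X]).toLinearMap

/-- The operator `∂^{β^a}`, sending `x^b` to `(1 + q^a + ⋯ + q^{a(b-1)}) x^(b-1)`. -/
def dq (q : k) (a : ℤ) : Module.End k k[X] :=
  (Polynomial.basisMonomials k).constr k
    fun b => (∑ i ∈ Finset.range b, q ^ (a * (i : ℤ))) • X ^ (b - 1)

/-- `φ` is homogeneous of degree `a : ℤ`. -/
def IsHomog (a : ℤ) (φ : Module.End k k[X]) : Prop :=
  ∀ b : ℕ, ∃ c : k, φ (X ^ b) = c • (if 0 ≤ a + (b : ℤ) then X ^ (a + (b : ℤ)).toNat else 0)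

/-- `M` is closed under `φ ↦ λ_r ∘ φ ∘ λ_s`. -/
def Closed (M : Submodule k (Module.End k k[X])) : Prop :=
  ∀ r s : k[X], ∀ φ ∈ M, lmul k r * φ * lmul k s ∈ M

/-- The filtration `D_q^n` of `q`-differential operators on `k[x]`. -/
def Dq (q : k) : ℕ → Submodule k (Module.End k k[X])
  | 0 => sInf {M | Closed M ∧
      {φ : Module.End k k[X] | ∃ a : ℤ, IsHomog a φ ∧ ∀ b : ℕ,
        φ * lmul k (X ^ b) = q ^ (a * (b : ℤ)) • (lmul k (X ^ b) * φ)} ⊆ ↑M}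
  | n + 1 => sInf {M | Closed M ∧ Dq q n ≤ M ∧
      {φ : Module.End k k[X] | ∃ a : ℤ, IsHomog a φ ∧ ∀ b : ℕ,
        φ * lmul k (X ^ b) - q ^ (a * (b : ℤ)) • (lmul k (X ^ b) * φ) ∈ Dq q n} ⊆ ↑M}




lemma zpow_mul0 {q : k} (hq0 : q ≠ 0) (m n : ℤ) : q ^ (m * n) = (q ^ m) ^ n := by
  have h : ∀ r : ℤ, q ^ r = ((Units.mk0 q hq0 ^ r : kˣ) : k) := by
    intro r
    rw [Units.val_zpow_eq_zpow_val, Units.val_mk0]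
  rw [h (m*n), h m, ← Units.val_zpow_eq_zpow_val, ← zpow_mul]

def E (q : k) (hq0 : q ≠ 0) (b : ℕ) : AddMonoidAlgebra k ℤ →+* k :=
  AddMonoidAlgebra.liftNCRingHom (RingHom.id k)
    { toFun := fun i => q ^ ((b : ℤ) * (Multiplicative.toAdd i))
      map_one' := by simp
      map_mul' := fun i j => by
        simp only [toAdd_mul, mul_add, zpow_add₀ hq0] }
    (fun _ _ => Commute.all _ _)

lemma E_single (q : k) (hq0 : q ≠ 0) (b : ℕ) (i : ℤ) (a : k) :
    E q hq0 b (AddMonoidAlgebra.single i a) = a * q ^ ((b : ℤ) * i) := by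
  unfold E AddMonoidAlgebra.liftNCRingHom
  exact AddMonoidAlgebra.liftNC_single _ _ _ _

lemma E_apply (q : k) (hq0 : q ≠ 0) (b : ℕ) (L : AddMonoidAlgebra k ℤ) :
    E q hq0 b L = L.coeff.sum fun i a => a * q ^ ((b : ℤ) * i) := by
  conv_lhs => rw [← L.sum_single]
  rw [map_finsuppSum]
  exact Finsupp.sum_congr fun i _ => E_single q hq0 b i _

/-- shift a Laurent polynomial: `L(T) ↦ L(q^e T)` -/
def Sh (q : k) (e : ℤ) (L : AddMonoidAlgebra k ℤ) : AddMonoidAlgebra k ℤ :=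
  L.coeff.sum fun i a => AddMonoidAlgebra.single i (a * q ^ (e * i))

lemma Sh_coeff (q : k) (e : ℤ) (L : AddMonoidAlgebra k ℤ) (i : ℤ) :
    (Sh q e L).coeff i = L.coeff i * q ^ (e * i) := by
  classical
  rw [Sh, Finsupp.sum, AddMonoidAlgebra.coeff_sum, Finsupp.finset_sum_apply]
  simp only [AddMonoidAlgebra.coeff_single, Finsupp.single_apply]
  rw [Finset.sum_ite_eq' L.coeff.support i (fun j => L.coeff j * q ^ (e * j))]
  by_cases h : i ∈ L.coeff.support
  · simp [h]
  · simp [h, Finsupp.notMem_support_iff.mp h]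

lemma E_Sh (q : k) (hq0 : q ≠ 0) (b c : ℕ) (e : ℤ) (h : (b : ℤ) + e = (c : ℤ))
    (L : AddMonoidAlgebra k ℤ) : E q hq0 b (Sh q e L) = E q hq0 c L := by
  rw [Sh, map_finsuppSum, E_apply]
  refine Finsupp.sum_congr fun i _ => ?_
  rw [E_single, mul_assoc, ← zpow_add₀ hq0, ← add_mul]
  rw [show e + (b:ℤ) = (c:ℤ) by omega]

section CZ
variable [CharZero k]

lemma pow_ne_one_of_trans {q : k} (hq : Transcendental ℚ q) {n : ℕ} (hn : n ≠ 0) :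
    q ^ n ≠ 1 := by
  intro h
  exact hq ⟨X ^ n - C 1, X_pow_sub_C_ne_zero (Nat.pos_of_ne_zero hn) 1, by simp [h]⟩

lemma zpow_injective_of_trans {q : k} (hq : Transcendental ℚ q) (hq0 : q ≠ 0) :
    Function.Injective (fun i : ℤ => q ^ i) := by
  intro i j hij
  simp only at hij
  by_contra hne
  have h1 : q ^ (i - j) = 1 := by
    rw [zpow_sub₀ hq0, hij, div_self (zpow_ne_zero _ hq0)]
  have hij0 : i - j ≠ 0 := sub_ne_zero.mpr hne
  rcases lt_or_gt_of_ne hij0 with hlt | hgt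
  · have h0 : q ^ (j - i) = 1 := by
      rw [show j - i = -(i-j) by ring, zpow_neg, h1, inv_one]
    have h2 : q ^ (j - i).toNat = 1 := by
      rw [← zpow_natCast, Int.toNat_of_nonneg (by omega)]; exact h0
    exact pow_ne_one_of_trans hq (by omega) h2
  · have h2 : q ^ (i - j).toNat = 1 := by
      rw [← zpow_natCast, Int.toNat_of_nonneg (by omega)]; exact h1
    exact pow_ne_one_of_trans hq (by omega) h2

lemma laurent_eq_zero {q : k} (hq : Transcendental ℚ q) (hq0 : q ≠ 0)
    (L : AddMonoidAlgebra k ℤ)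
    (h : ∀ b : ℕ, E q hq0 (b + 1) L = 0) : L = 0 := by
  classical
  set s := L.coeff.support with hs
  set n := s.card with hn
  let e : s ≃ Fin n := s.equivFin
  let μ : Fin n → k := fun c => q ^ ((e.symm c : ℤ))
  have hμinj : Function.Injective μ := by
    intro c c' hcc
    have h1 := zpow_injective_of_trans hq hq0 hcc
    have h2 : e.symm c = e.symm c' := by exact_mod_cast h1
    exact e.symm.injective h2
  have hμ0 : ∀ c, μ c ≠ 0 := fun c => zpow_ne_zero _ hq0
  let A : Matrix (Fin n) (Fin n) k := Matrix.of fun r c => μ c ^ ((r : ℕ) + 1)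
  have hdet : A.det ≠ 0 := by
    have hA : A = (Matrix.vandermonde μ).transpose * Matrix.diagonal μ := by
      ext r c
      simp [A, Matrix.mul_apply, Matrix.vandermonde, Matrix.diagonal_apply,
        Finset.sum_ite_eq', pow_succ]
    rw [hA, Matrix.det_mul, Matrix.det_transpose, Matrix.det_vandermonde,
      Matrix.det_diagonal]
    refine mul_ne_zero (Finset.prod_ne_zero_iff.mpr fun i _ => ?_)
      (Finset.prod_ne_zero_iff.mpr fun c _ => hμ0 c)
    exact Finset.prod_ne_zero_iff.mpr fun j hj =>
      sub_ne_zero.mpr fun hcc => absurd (hμinj hcc.symm)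
        (by simp only [Finset.mem_Ioi] at hj
            exact fun hji => absurd (hji ▸ rfl : j = i) (ne_of_gt hj))
  have hmv : A.mulVec (fun c => L.coeff ((e.symm c : ℤ))) = 0 := by
    funext r
    have hE := h r
    rw [E_apply] at hE
    rw [Finsupp.sum] at hE
    rw [← Finset.sum_coe_sort s] at hE
    push_cast at hE
    rw [← Equiv.sum_comp e.symm
      (fun a : s => L.coeff (a : ℤ) * q ^ ((((r : ℕ) : ℤ) + 1) * (a : ℤ)))] at hE
    simp only [Matrix.mulVec, dotProduct, Pi.zero_apply, A, Matrix.of_apply]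
    rw [← hE]
    refine Finset.sum_congr rfl fun c _ => ?_
    rw [mul_comm ((((r:ℕ)):ℤ)+1) _, zpow_mul0 hq0,
      show ((((r:ℕ)):ℤ)+1) = (((r:ℕ)+1 : ℕ) : ℤ) by push_cast; ring, zpow_natCast]
    ring
  have hx : (fun c => L.coeff ((e.symm c : ℤ))) = 0 := by
    have h2 := congrArg (fun v => Matrix.mulVec A⁻¹ v) hmv
    simpa [Matrix.mulVec_mulVec, Matrix.nonsing_inv_mul A (Ne.isUnit hdet),
      Matrix.one_mulVec, Matrix.mulVec_zero] using h2
  ext i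
  by_cases hi : i ∈ s
  · have h3 := congrFun hx (e ⟨i, hi⟩)
    simpa using h3
  · exact Finsupp.notMem_support_iff.mp hi

lemma no_laurent_id {q : k} (hq : Transcendental ℚ q) (hq0 : q ≠ 0)
    (L : AddMonoidAlgebra k ℤ)
    (h : ∀ b : ℕ, E q hq0 (b + 1) L = ((b : k) + 1)) : False := by
  classical
  set L' := Sh q 1 L - L with hL'def
  have hL' : ∀ b : ℕ, E q hq0 (b + 1) L' = 1 := by
    intro b
    rw [hL'def, map_sub, E_Sh q hq0 (b+1) (b+2) 1 (by push_cast; ring), h, h]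
    push_cast
    ring
  have hM : Sh q 1 L' - L' = 0 :=
    laurent_eq_zero hq hq0 _ (fun b => by
      rw [map_sub, E_Sh q hq0 (b+1) (b+2) 1 (by push_cast; ring), hL', hL', sub_self])
  have hL'0 : L' = 0 := by
    ext i
    have h1 : L'.coeff i * q ^ (1 * i) - L'.coeff i = 0 := by
      have h0 := congrArg (fun f : AddMonoidAlgebra k ℤ => f.coeff i) hM
      rw [AddMonoidAlgebra.coeff_sub] at h0
      erw [Finsupp.sub_apply] at h0
      rw [Sh_coeff] at h0
      exact h0
    rw [one_mul] at h1
    have h2 : L'.coeff i * (q ^ i - 1) = 0 := by ring_nf; ring_nf at h1; linear_combination h1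
    by_cases hi : i = 0
    · subst hi
      have h4 : L'.coeff (0:ℤ) = L.coeff 0 * q ^ ((1:ℤ) * 0) - L.coeff 0 := by
        rw [hL'def]
        rw [AddMonoidAlgebra.coeff_sub]
        erw [Finsupp.sub_apply]
        rw [Sh_coeff]
      simpa using h4
    · have hqi : q ^ i - 1 ≠ 0 := by
        intro hqi
        exact hi (zpow_injective_of_trans hq hq0
          (by simpa using sub_eq_zero.mp hqi : q ^ i = q ^ (0:ℤ)))
      simpa [hqi] using mul_eq_zero.mp h2
  have h3 := hL' 0
  rw [hL'0, map_zero] at h3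
  exact zero_ne_one h3

end CZ

section Good

variable (q : k)

/-- `X^n` for integer `n`, with zero for negative `n`. -/
def Xpw (n : ℤ) : k[X] := if 0 ≤ n then X ^ n.toNat else 0

lemma coeff_Xpw (n : ℤ) (m : ℕ) : (Xpw (k := k) n).coeff m = if n = (m : ℤ) then 1 else 0 := by
  rw [Xpw]
  split_ifs with h1 h2 h3
  · rw [coeff_X_pow, if_pos (by omega)]
  · rw [coeff_X_pow, if_neg (by omega)]
  · omega
  · simp

lemma Xpw_of_nat (b : ℕ) : Xpw (k := k) (b : ℤ) = X ^ b := by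
  rw [Xpw, if_pos (by omega), Int.toNat_natCast]

variable (hq0 : q ≠ 0)

/-- operators whose coefficients on monomials are Laurent polynomials in `q^b`. -/
def GoodSet : Subalgebra k (Module.End k k[X]) where
  carrier := {φ | ∃ (ι : Type) (_ : Fintype ι) (d : ι → ℤ) (L : ι → AddMonoidAlgebra k ℤ),
    (∀ (j : ι) (b : ℕ), (b : ℤ) + d j < 0 → E q hq0 b (L j) = 0) ∧
    ∀ b : ℕ, φ (X ^ b) = ∑ j, E q hq0 b (L j) • Xpw ((b : ℤ) + d j)}
  zero_mem' := by
    refine ⟨PEmpty, inferInstance, fun j => 0, fun j => 0, fun j => j.elim, fun b => ?_⟩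
    simp
  one_mem' := by
    refine ⟨PUnit, inferInstance, fun _ => 0, fun _ => 1,
      fun j b hb => by simp at hb; omega, fun b => ?_⟩
    simp [Xpw_of_nat]
  algebraMap_mem' := fun r => by
    refine ⟨PUnit, inferInstance, fun _ => 0, fun _ => AddMonoidAlgebra.single 0 r,
      fun j b hb => by simp at hb; omega, fun b => ?_⟩
    have hE : E q hq0 b (AddMonoidAlgebra.single 0 r) = r := by
      rw [E_single]; simp
    have hE2 : E q hq0 b (LaurentPolynomial.C r) = r := hE
    simp [Module.algebraMap_end_apply, hE, hE2, Xpw_of_nat]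
  add_mem' := by
    rintro φ ψ ⟨ι₁, h₁, d₁, L₁, v₁, e₁⟩ ⟨ι₂, h₂, d₂, L₂, v₂, e₂⟩
    refine ⟨ι₁ ⊕ ι₂, inferInstance, Sum.elim d₁ d₂, Sum.elim L₁ L₂, ?_, fun b => ?_⟩
    · rintro (j | j) b hb
      · exact v₁ j b hb
      · exact v₂ j b hb
    · rw [LinearMap.add_apply, e₁ b, e₂ b, Fintype.sum_sum_type]
      rfl
  mul_mem' := by
    rintro φ ψ ⟨ι₁, h₁, d₁, L₁, v₁, e₁⟩ ⟨ι₂, h₂, d₂, L₂, v₂, e₂⟩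
    refine ⟨ι₂ × ι₁, inferInstance, fun p => d₂ p.1 + d₁ p.2,
      fun p => L₂ p.1 * Sh q (d₂ p.1) (L₁ p.2), ?_, fun b => ?_⟩
    · rintro ⟨j₂, j₁⟩ b hb
      simp only at hb ⊢
      rw [map_mul]
      by_cases h2 : (b : ℤ) + d₂ j₂ < 0
      · rw [v₂ j₂ b h2, zero_mul]
      · push_neg at h2
        set c := ((b : ℤ) + d₂ j₂).toNat with hc
        have hcz : (b : ℤ) + d₂ j₂ = (c : ℤ) := by omega
        rw [E_Sh q hq0 b c _ hcz, v₁ j₁ c (by omega), mul_zero]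
    · rw [Module.End.mul_apply, e₂ b, map_sum, Fintype.sum_prod_type]
      refine Finset.sum_congr rfl fun j₂ _ => ?_
      rw [map_smul]
      by_cases h2 : (b : ℤ) + d₂ j₂ < 0
      · rw [Xpw, if_neg (by omega), map_zero, smul_zero]
        refine (Finset.sum_eq_zero fun j₁ _ => ?_).symm
        simp only
        rw [map_mul, v₂ j₂ b h2, zero_mul, zero_smul]
      · push_neg at h2
        set c := ((b : ℤ) + d₂ j₂).toNat with hc
        have hcz : (b : ℤ) + d₂ j₂ = (c : ℤ) := by omega
        rw [Xpw, if_pos (by omega), ← hc, e₁ c, Finset.smul_sum]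
        refine Finset.sum_congr rfl fun j₁ _ => ?_
        simp only
        rw [map_mul, E_Sh q hq0 b c _ hcz, smul_smul]
        congr 2
        omega

end Good

section Apply
variable (q : k)

lemma lmul_apply (r p : k[X]) : lmul k r p = r * p := rfl

lemma lmul_one' : lmul k 1 = 1 := by
  rw [lmul, LinearMap.mulLeft_one]
  rfl

lemma dq_apply (a : ℤ) (b : ℕ) :
    dq q a (X ^ b) = (∑ i ∈ Finset.range b, q ^ (a * (i : ℤ))) • X ^ (b - 1) := by
  have hb : (X : k[X]) ^ b = (Polynomial.basisMonomials k) b := by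
    simp [Polynomial.coe_basisMonomials, X_pow_eq_monomial]
  rw [dq, hb, Module.Basis.constr_basis]

lemma dq0_apply (b : ℕ) : dq q 0 (X ^ b) = (b : k) • X ^ (b - 1) := by
  rw [dq_apply]
  congr 1
  simp

lemma sigma_apply (hq0 : q ≠ 0) (a : ℤ) (b : ℕ) :
    sigma q a (X ^ b) = q ^ (a * (b : ℤ)) • X ^ b := by
  rw [sigma, AlgHom.toLinearMap_apply, map_pow, aeval_X, mul_pow, ← C_pow,
    ← smul_eq_C_mul, zpow_mul0 hq0, zpow_natCast]

end Apply

section GoodMem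
variable (q : k) (hq0 : q ≠ 0)

lemma lmulX_mem_good : lmul k X ∈ GoodSet q hq0 := by
  refine ⟨PUnit, inferInstance, fun _ => 1, fun _ => 1,
    fun j b hb => by simp at hb; omega, fun b => ?_⟩
  have h1 : Xpw (k := k) ((b : ℤ) + 1) = X ^ (b + 1) := by
    rw [show ((b : ℤ) + 1) = ((b + 1 : ℕ) : ℤ) by push_cast; ring, Xpw_of_nat]
  simp [lmul_apply, h1, pow_succ, mul_comm]

lemma sigma_mem_good (a : ℤ) : sigma q a ∈ GoodSet q hq0 := by
  refine ⟨PUnit, inferInstance, fun _ => 0, fun _ => AddMonoidAlgebra.single a 1,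
    fun j b hb => by simp at hb; omega, fun b => ?_⟩
  rw [sigma_apply q hq0]
  have h1 : E q hq0 b (AddMonoidAlgebra.single a 1) = q ^ (a * (b : ℤ)) := by
    rw [E_single, one_mul, mul_comm]
  have h2 : E q hq0 b (LaurentPolynomial.T a) = q ^ (a * (b : ℤ)) := h1
  simp [h1, h2, Xpw_of_nat]

lemma dq1_mem_good (hq1 : q ≠ 1) : dq q 1 ∈ GoodSet q hq0 := by
  set L : AddMonoidAlgebra k ℤ :=
    AddMonoidAlgebra.single 1 (q - 1)⁻¹ - AddMonoidAlgebra.single 0 (q - 1)⁻¹ with hLdef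
  have hE : ∀ b : ℕ, E q hq0 b L = (q ^ b - 1) / (q - 1) := by
    intro b
    rw [hLdef, map_sub, E_single, E_single]
    rw [mul_one, mul_zero, zpow_zero, mul_one, zpow_natCast]
    field_simp
  have hgeom : ∀ b : ℕ, (∑ i ∈ Finset.range b, q ^ ((1:ℤ) * (i : ℤ))) = (q ^ b - 1) / (q - 1) := by
    intro b
    rw [← geom_sum_eq hq1]
    refine Finset.sum_congr rfl fun i _ => ?_
    rw [one_mul, zpow_natCast]
  refine ⟨PUnit, inferInstance, fun _ => -1, fun _ => L, ?_, fun b => ?_⟩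
  · intro j b hb
    have hb' : (b : ℤ) + (-1) < 0 := hb
    have hb0 : b = 0 := by omega
    subst hb0
    rw [hE 0]
    simp
  · rw [dq_apply, hgeom b]
    cases b with
    | zero => simp [Xpw]
    | succ m =>
      have h1 : Xpw (k := k) (((m + 1 : ℕ) : ℤ) + (-1)) = X ^ m := by
        rw [show (((m + 1 : ℕ) : ℤ) + (-1)) = ((m : ℕ) : ℤ) by push_cast; ring, Xpw_of_nat]
      simp [h1, hE, Xpw_of_nat]

lemma dq0_not_mem_good [CharZero k] (hq : Transcendental ℚ q) : dq q 0 ∉ GoodSet q hq0 := by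
  rintro ⟨ι, hι, d, L, v, e⟩
  classical
  set LL : AddMonoidAlgebra k ℤ :=
    ∑ j ∈ Finset.univ.filter (fun j => d j = -1), L j with hLL
  have key : ∀ b : ℕ, E q hq0 (b + 1) LL = (b : k) + 1 := by
    intro b
    have e1 := e (b + 1)
    rw [dq0_apply, Nat.add_sub_cancel] at e1
    have e2 := congrArg (fun p : k[X] => p.coeff b) e1
    simp only [Polynomial.finset_sum_coeff, Polynomial.coeff_smul, coeff_Xpw,
      Polynomial.coeff_X_pow, eq_self_iff_true, if_true, smul_eq_mul, mul_one] at e2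
    push_cast at e2
    rw [hLL, map_sum, Finset.sum_filter]
    refine Eq.trans (Finset.sum_congr rfl fun j _ => ?_) e2.symm
    by_cases hj : d j = -1
    · rw [if_pos hj, if_pos (by omega), mul_one]
    · rw [if_neg hj, if_neg (by omega), mul_zero]
  exact no_laurent_id hq hq0 LL key

end GoodMem

section DqLemmas
variable (q : k)

lemma closed_Dq (n : ℕ) : Closed (Dq q n) := by
  cases n with
  | zero =>
    intro r s φ hφ
    rw [Dq, Submodule.mem_sInf] at hφ ⊢
    intro M hM
    exact hM.1 r s φ (hφ M hM)
  | succ m =>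
    intro r s φ hφ
    rw [Dq, Submodule.mem_sInf] at hφ ⊢
    intro M hM
    exact hM.1 r s φ (hφ M hM)

lemma one_mem_Dq0 : (1 : Module.End k k[X]) ∈ Dq q 0 := by
  rw [Dq, Submodule.mem_sInf]
  intro M hM
  apply hM.2
  refine ⟨0, fun b => ⟨1, ?_⟩, fun b => by simp⟩
  rw [show (1 : Module.End k k[X]) (X ^ b) = X ^ b from rfl, if_pos (by omega), one_smul]
  congr 1
  omega

lemma lmul_mem_Dq0 (r : k[X]) : lmul k r ∈ Dq q 0 := by
  have h1 := closed_Dq q 0 r 1 1 (one_mem_Dq0 q)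
  rw [lmul_one', mul_one, mul_one] at h1
  exact h1

lemma Dq_le_succ (n : ℕ) : Dq q n ≤ Dq q (n + 1) := by
  conv_rhs => rw [Dq]
  exact le_sInf fun M hM => hM.2.1

lemma N_apply (b : ℕ) : (lmul k X * dq q 0) (X ^ b) = (b : k) • X ^ b := by
  rw [Module.End.mul_apply, dq0_apply]
  cases b with
  | zero => simp
  | succ m =>
    rw [lmul_apply, Nat.add_sub_cancel, mul_smul_comm, ← pow_succ']

lemma N_mem_Dq1 : lmul k X * dq q 0 ∈ Dq q 1 := by
  rw [Dq, Submodule.mem_sInf]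
  intro M hM
  apply hM.2.2
  refine ⟨0, fun b => ⟨(b : k), ?_⟩, fun b => ?_⟩
  · rw [N_apply, if_pos (by omega)]
    congr 2
    omega
  · have hop : (lmul k X * dq q 0) * lmul k (X ^ b) -
        q ^ ((0:ℤ) * (b : ℤ)) • (lmul k (X ^ b) * (lmul k X * dq q 0)) =
        (b : k) • lmul k (X ^ b) := by
      refine Module.Basis.ext (Polynomial.basisMonomials k) fun c => ?_
      have hc : (Polynomial.basisMonomials k) c = (X : k[X]) ^ c := by
        simp [Polynomial.coe_basisMonomials, X_pow_eq_monomial]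
      rw [hc]
      simp only [LinearMap.sub_apply, LinearMap.smul_apply, Module.End.mul_apply,
        lmul_apply, zero_mul, zpow_zero, one_smul, ← pow_add]
      rw [dq0_apply, dq0_apply]
      rcases c with _ | c'
      · simp only [Nat.cast_zero, zero_smul, mul_zero, sub_zero]
        rcases b with _ | b'
        · simp
        · rw [Nat.add_zero, Nat.add_sub_cancel]
          simp only [Nat.cast_smul_eq_nsmul]
          ring
      · rw [Nat.add_sub_cancel, show b + (c' + 1) - 1 = b + c' by omega]
        simp only [Nat.cast_smul_eq_nsmul]
        ring
    rw [hop]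
    exact Submodule.smul_mem _ _ (lmul_mem_Dq0 q _)

end DqLemmas

section DqTop
variable (q : k)

lemma dq0_mem_Dq2 : dq q 0 ∈ Dq q 2 := by
  rw [Dq, Submodule.mem_sInf]
  intro M hM
  apply hM.2.2
  refine ⟨-1, fun b => ?_, fun b => ?_⟩
  · rcases b with _ | m
    · exact ⟨0, by rw [dq0_apply]; simp⟩
    · refine ⟨((m + 1 : ℕ) : k), ?_⟩
      rw [dq0_apply, if_pos (by push_cast; omega), Nat.add_sub_cancel]
      congr 2
      omega
  · rcases b with _ | m
    · have h0 : dq q 0 * lmul k ((X : k[X]) ^ 0) -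
          q ^ ((-1 : ℤ) * ((0 : ℕ) : ℤ)) • (lmul k ((X : k[X]) ^ 0) * dq q 0) = 0 := by
        rw [pow_zero, lmul_one', mul_one, one_mul]
        simp
      rw [h0]
      exact zero_mem _
    · have hop : dq q 0 * lmul k (X ^ (m + 1)) -
          q ^ ((-1 : ℤ) * ((m + 1 : ℕ) : ℤ)) • (lmul k (X ^ (m + 1)) * dq q 0) =
          ((m + 1 : ℕ) : k) • lmul k (X ^ m) +
            (1 - q ^ ((-1 : ℤ) * ((m + 1 : ℕ) : ℤ))) •
              (lmul k (X ^ m) * (lmul k X * dq q 0)) := by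
        set t : k := q ^ ((-1 : ℤ) * ((m + 1 : ℕ) : ℤ)) with ht
        refine Module.Basis.ext (Polynomial.basisMonomials k) fun c => ?_
        have hc : (Polynomial.basisMonomials k) c = (X : k[X]) ^ c := by
          simp [Polynomial.coe_basisMonomials, X_pow_eq_monomial]
        rw [hc]
        simp only [LinearMap.sub_apply, LinearMap.add_apply, LinearMap.smul_apply,
          Module.End.mul_apply, lmul_apply, ← pow_add]
        rw [dq0_apply, dq0_apply]
        rcases c with _ | c'
        · simp
        · rw [show m + 1 + (c' + 1) - 1 = m + 1 + c' by omega]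
          simp only [smul_eq_C_mul, map_sub, map_one, Polynomial.C_eq_natCast]
          push_cast
          ring
      rw [hop]
      refine Submodule.add_mem _
        (Submodule.smul_mem _ _ (Dq_le_succ q 0 (lmul_mem_Dq0 q _)))
        (Submodule.smul_mem _ _ ?_)
      have h1 := closed_Dq q 1 (X ^ m) 1 _ (N_mem_Dq1 q)
      rwa [lmul_one', mul_one] at h1

end DqTop

/-- Remark R:betasigma: the usual derivative is not in the subalgebra
generated by lambda_x, dq 1 and the sigma_a; in particular D_q ≠ D_β·σ(Γ). -/
theorem stmt8 [CharZero k] (q : k) (hq : Transcendental ℚ q) :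
    dq q 0 ∉ Algebra.adjoin k (({lmul k X, dq q 1} : Set (Module.End k k[X])) ∪ Set.range (sigma q)) ∧
    {φ : Module.End k k[X] | ∃ n : ℕ, φ ∈ Dq q n} ≠
      ↑(Algebra.adjoin k
        (({lmul k X, dq q 1} : Set (Module.End k k[X])) ∪ Set.range (sigma q))) := by
  have hq0 : q ≠ 0 := fun h => hq (by rw [h]; exact isAlgebraic_zero)
  have hq1 : q ≠ 1 := fun h => hq (by rw [h]; exact isAlgebraic_one)
  have hmain : dq q 0 ∉ Algebra.adjoin k
      (({lmul k X, dq q 1} : Set (Module.End k k[X])) ∪ Set.range (sigma q)) := by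
    intro hmem
    have hsub : Algebra.adjoin k
        (({lmul k X, dq q 1} : Set (Module.End k k[X])) ∪ Set.range (sigma q)) ≤
        GoodSet q hq0 := by
      apply Algebra.adjoin_le
      rintro φ ((rfl | rfl) | ⟨a, rfl⟩)
      · exact lmulX_mem_good q hq0
      · exact dq1_mem_good q hq0 hq1
      · exact sigma_mem_good q hq0 a
    exact dq0_not_mem_good q hq0 hq (hsub hmem)
  refine ⟨hmain, fun hEq => hmain ?_⟩
  have h2 : dq q 0 ∈ {φ : Module.End k k[X] | ∃ n : ℕ, φ ∈ Dq q n} := ⟨2, dq0_mem_Dq2 q⟩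
  rw [hEq] at h2
  exact h2

end QDiff1
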